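/- Positively represented measurements preserve positivity of the Wigner representation (core of the no-distillation theorem): let m ≥ 1, let composite phase point operators on m qudits be B_𝐯 for 𝐯 ∈ (Fin m → ZMod d × ZMod d), defined entrywise by (B_𝐯) x y = ∏_i A_(𝐯 i) (x i) (y i) for x, y : Fin m → ZMod d. Let σ : Matrix ((ZMod d) × (Fin m → ZMod d)) ((ZMod d) × (Fin m → ZMod d)) ℂ be Hermitian with Re(trace((A_u ⊗ B_𝐯) * σ)) ≥ 0 for all u and 𝐯, where ⊗ is the Kronecker product. Let P : Matrix (Fin m → ZMod d) (Fin m → ZMod d) ℂ be Hermitian with Re(trace(B_𝐯 * P)) ≥ 0 for all 𝐯. Then for every u ∈ ZMod d × ZMod d, Re(trace((A_u ⊗ P) * σ)) ≥ 0. -/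

import Mathlib

open Matrix Complex

/-- ω = exp(2πi/d). -/
noncomputable def omegaC (d : ℕ) : ℂ := Complex.exp (2 * Real.pi * Complex.I / d)

/-- The clock matrix `Z`, with `Z x x = ω ^ x.val`. -/
noncomputable def Zmat (d : ℕ) : Matrix (ZMod d) (ZMod d) ℂ :=
  Matrix.diagonal (fun x => omegaC d ^ x.val)

/-- The shift matrix `X`, with `X x y = 1` iff `x = y + 1`. -/
noncomputable def Xmat (d : ℕ) : Matrix (ZMod d) (ZMod d) ℂ :=
  Matrix.of fun x y => if x = y + 1 then 1 else 0

/-- The Heisenberg–Weyl operator `T_a`. -/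
noncomputable def TW (d : ℕ) [NeZero d] (a : ZMod d × ZMod d) : Matrix (ZMod d) (ZMod d) ℂ :=
  omegaC d ^ ((-((2 : ZMod d)⁻¹ * a.1 * a.2)).val) • (Zmat d ^ a.1.val * Xmat d ^ a.2.val)

/-- The phase point operator at the origin, `A_0 = (1/d) • ∑ a, T_a`. -/
noncomputable def Apoint0 (d : ℕ) [NeZero d] : Matrix (ZMod d) (ZMod d) ℂ :=
  (1 / (d : ℂ)) • ∑ a : ZMod d × ZMod d, TW d a

/-- The phase point operator `A_u = T_u * A_0 * T_uᴴ`. -/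
noncomputable def Apoint (d : ℕ) [NeZero d] (u : ZMod d × ZMod d) : Matrix (ZMod d) (ZMod d) ℂ :=
  TW d u * Apoint0 d * (TW d u)ᴴ

open Kronecker

/-- Composite phase point operator on `m` qudits. -/
noncomputable def Bcomp (d : ℕ) [NeZero d] (m : ℕ) (v : Fin m → ZMod d × ZMod d) :
    Matrix (Fin m → ZMod d) (Fin m → ZMod d) ℂ :=
  Matrix.of fun x y => ∏ i : Fin m, Apoint d (v i) (x i) (y i)

set_option linter.unusedSectionVars false

section chi
variable (d : ℕ) [NeZero d]

lemma omega_prim : IsPrimitiveRoot (omegaC d) d :=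
  Complex.isPrimitiveRoot_exp d (NeZero.ne d)

lemma omega_pow_d : omegaC d ^ d = 1 := (omega_prim d).pow_eq_one

noncomputable def chi (x : ZMod d) : ℂ := omegaC d ^ x.val

lemma chi_natCast (n : ℕ) : chi d (n : ZMod d) = omegaC d ^ n := by
  rw [chi, ZMod.val_natCast]
  conv_rhs => rw [← Nat.mod_add_div n d, pow_add, pow_mul, omega_pow_d, one_pow, mul_one]

lemma chi_add (x y : ZMod d) : chi d (x + y) = chi d x * chi d y := by
  have : ((x.val + y.val : ℕ) : ZMod d) = x + y := by
    push_cast [ZMod.natCast_val, ZMod.cast_id]; ring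
  rw [← this, chi_natCast, pow_add, chi, chi]

lemma chi_zero : chi d 0 = 1 := by
  have := chi_natCast d 0
  simpa using this

lemma chi_mul_chi_neg (x : ZMod d) : chi d x * chi d (-x) = 1 := by
  rw [← chi_add]; simp [chi_zero]

lemma chi_neg (x : ZMod d) : chi d (-x) = (chi d x)⁻¹ :=
  eq_inv_of_mul_eq_one_left (by rw [mul_comm]; exact chi_mul_chi_neg d x)

lemma chi_conj (x : ZMod d) : (starRingEnd ℂ) (chi d x) = chi d (-x) := by
  rw [chi_neg, chi, map_pow, ← inv_pow]
  congr 1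
  rw [omegaC, ← Complex.exp_conj, ← Complex.exp_neg]
  congr 1
  rw [map_div₀]
  simp [Complex.conj_I, Complex.conj_ofReal, map_ofNat, Complex.conj_natCast]
  ring

lemma chi_star (x : ZMod d) : star (chi d x) = chi d (-x) := chi_conj d x

lemma chi_ne_one {c : ZMod d} (hc : c ≠ 0) : chi d c ≠ 1 := by
  rw [chi]
  intro h
  rw [(omega_prim d).pow_eq_one_iff_dvd] at h
  exact hc (by rw [← ZMod.val_eq_zero]; exact Nat.eq_zero_of_dvd_of_lt h (ZMod.val_lt c) |>.symm ▸ rfl)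

lemma chi_mul (c x : ZMod d) : chi d (c * x) = chi d c ^ x.val := by
  have h1 : c * x = x.val • c := by
    rw [nsmul_eq_mul, ZMod.natCast_val, ZMod.cast_id, mul_comm]
  rw [h1]
  induction x.val with
  | zero => simp [chi_zero]
  | succ k ih => rw [succ_nsmul, chi_add, ih, pow_succ]

lemma chi_sum (c : ZMod d) : ∑ x : ZMod d, chi d (c * x) = if c = 0 then (d : ℂ) else 0 := by
  split_ifs with h
  · subst h; simp [chi_zero, Finset.card_univ]
  · simp only [chi_mul]
    have hz : chi d c ≠ 1 := chi_ne_one d h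
    have hpow : chi d c ^ d = 1 := by
      rw [chi, ← pow_mul, mul_comm, pow_mul, omega_pow_d, one_pow]
    obtain ⟨k, rfl⟩ := Nat.exists_eq_succ_of_ne_zero (NeZero.ne d)
    have : ∑ x : ZMod (k+1), chi (k+1) c ^ x.val = ∑ i ∈ Finset.range (k+1), chi (k+1) c ^ i :=
      Fin.sum_univ_eq_sum_range _ _
    rw [this, geom_sum_eq hz, hpow, sub_self, zero_div]

end chi

section mats
variable (d : ℕ) [NeZero d]

lemma two_unit (hodd : Odd d) : IsUnit (2 : ZMod d) := by
  have : ((2 : ℕ) : ZMod d) = (2 : ZMod d) := by push_cast; rfl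
  rw [← this, ZMod.isUnit_iff_coprime]
  rwa [Nat.coprime_two_left]

lemma Xmat_pow (n : ℕ) :
    Xmat d ^ n = Matrix.of fun x y => if x = y + (n : ZMod d) then 1 else 0 := by
  induction n with
  | zero =>
    ext x y
    simp [Matrix.one_apply, eq_comm]
  | succ k ih =>
    ext x y
    rw [pow_succ, ih, Matrix.mul_apply]
    simp only [Matrix.of_apply, Xmat, mul_ite, mul_one, mul_zero]
    rw [Finset.sum_ite_eq' Finset.univ (y + 1) (fun b => if x = b + (k : ZMod d) then (1:ℂ) else 0)]
    push_cast
    simp [add_comm, add_assoc, add_left_comm]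

lemma Zmat_pow (n : ℕ) :
    Zmat d ^ n = Matrix.diagonal fun x => chi d ((n : ZMod d) * x) := by
  rw [Zmat, Matrix.diagonal_pow]
  have hfun : ((fun x : ZMod d => omegaC d ^ x.val) ^ n) = fun x : ZMod d => chi d ((n : ZMod d) * x) := by
    funext x
    rw [chi_mul, chi_natCast]
    simp only [Pi.pow_apply]
    rw [← pow_mul, ← pow_mul, mul_comm]
  rw [hfun]

lemma TW_apply (a : ZMod d × ZMod d) (j k : ZMod d) :
    TW d a j k = if j = k + a.2 then chi d (-((2 : ZMod d)⁻¹ * a.1 * a.2) + a.1 * j) else 0 := by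
  rw [TW, Matrix.smul_apply, Zmat_pow, Xmat_pow, Matrix.diagonal_mul]
  simp only [Matrix.of_apply, ZMod.natCast_val, ZMod.cast_id, smul_eq_mul, mul_ite, mul_one, mul_zero]
  split_ifs
  · rw [chi_add]; rfl
  · rfl

end mats

section apoint
variable (d : ℕ) [NeZero d] (hodd : Odd d)
include hodd

lemma inv_two_mul_two : (2 : ZMod d)⁻¹ * 2 = 1 :=
  ZMod.inv_mul_of_unit 2 (two_unit d hodd)

lemma Apoint0_apply (j k : ZMod d) :
    Apoint0 d j k = if j + k = 0 then 1 else 0 := by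
  have h2 : (2 : ZMod d)⁻¹ * 2 = 1 := inv_two_mul_two d hodd
  rw [Apoint0, Matrix.smul_apply, Matrix.sum_apply]
  rw [Fintype.sum_prod_type]
  have step1 : ∀ a1 : ZMod d, ∑ a2 : ZMod d, TW d (a1, a2) j k
      = chi d (((2 : ZMod d)⁻¹ * (j + k)) * a1) := by
    intro a1
    have : ∀ a2 : ZMod d, TW d (a1, a2) j k
        = if a2 = j - k then chi d (-((2 : ZMod d)⁻¹ * a1 * a2) + a1 * j) else 0 := by
      intro a2
      rw [TW_apply]
      congr 1
      simp only [eq_iff_iff]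
      constructor
      · intro h; rw [h]; ring
      · intro h; rw [h]; ring
    simp only [this]
    rw [Finset.sum_ite_eq' Finset.univ (j - k) (fun a2 => chi d (-((2 : ZMod d)⁻¹ * a1 * a2) + a1 * j))]
    simp only [Finset.mem_univ, if_true]
    congr 1
    linear_combination (-(a1 * j) : ZMod d) * h2
  simp only [step1]
  rw [chi_sum]
  have hcond : ((2 : ZMod d)⁻¹ * (j + k) = 0) = (j + k = 0) := by
    simp only [eq_iff_iff]
    constructor
    · intro h
      have := congrArg (fun t => (2 : ZMod d) * t) h
      simp only [mul_zero] at this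
      rw [← this]
      rw [← mul_assoc, mul_comm (2 : ZMod d) _, h2, one_mul]
    · intro h; rw [h, mul_zero]
  simp only [hcond]
  have hd0 : (d : ℂ) ≠ 0 := by
    exact_mod_cast Nat.cast_ne_zero.mpr (NeZero.ne d)
  split_ifs
  · rw [smul_eq_mul]; field_simp
  · simp

lemma Apoint_apply (u : ZMod d × ZMod d) (j k : ZMod d) :
    Apoint d u j k = if j + k = 2 * u.2 then chi d (u.1 * (j - k)) else 0 := by
  have h2 : (2 : ZMod d)⁻¹ * 2 = 1 := inv_two_mul_two d hodd
  set c : ZMod d := -((2 : ZMod d)⁻¹ * u.1 * u.2) with hc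
  rw [Apoint, Matrix.mul_apply]
  have hTA : ∀ l : ZMod d, (TW d u * Apoint0 d) j l
      = if l = u.2 - j then chi d (c + u.1 * j) else 0 := by
    intro l
    rw [Matrix.mul_apply]
    have : ∀ p : ZMod d, TW d u j p * Apoint0 d p l
        = if p = j - u.2 then (chi d (c + u.1 * j) * if l = u.2 - j then 1 else 0) else 0 := by
      intro p
      rw [TW_apply, Apoint0_apply d hodd]
      by_cases hp : p = j - u.2
      · subst hp
        rw [if_pos (by ring), if_pos rfl]
        congr 1
        by_cases hl : l = u.2 - j
        · rw [if_pos hl, if_pos (by rw [hl]; ring)]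
        · rw [if_neg hl, if_neg (fun h => hl (by linear_combination h))]
      · rw [if_neg (fun h => hp (by linear_combination -h)), if_neg hp, zero_mul]
    simp only [this]
    rw [Finset.sum_ite_eq' Finset.univ (j - u.2)]
    simp only [Finset.mem_univ, if_true]
    split_ifs with h
    · rw [mul_one]
    · rw [mul_zero]
  simp only [hTA, Matrix.conjTranspose_apply, ite_mul, zero_mul]
  rw [Finset.sum_ite_eq' Finset.univ (u.2 - j) (fun x => chi d (c + u.1 * j) * star (TW d u k x))]
  simp only [Finset.mem_univ, if_true]
  rw [TW_apply]
  by_cases hcond : j + k = 2 * u.2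
  · rw [if_pos hcond]
    rw [if_pos (by linear_combination hcond), chi_star, ← chi_add]
    congr 1
    ring
  · rw [if_neg hcond, if_neg (fun h => hcond (by linear_combination h)), star_zero, mul_zero]

end apoint

section complete
variable (d : ℕ) [NeZero d] (hodd : Odd d)
include hodd

lemma two_cancel {x y : ZMod d} (h : 2 * x = 2 * y) : x = y := by
  have h2 : (2 : ZMod d)⁻¹ * 2 = 1 := inv_two_mul_two d hodd
  calc x = ((2 : ZMod d)⁻¹ * 2) * x := by rw [h2, one_mul]
    _ = (2 : ZMod d)⁻¹ * (2 * y) := by rw [mul_assoc, h]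
    _ = y := by rw [← mul_assoc, h2, one_mul]

lemma Apoint_star (u : ZMod d × ZMod d) (j k : ZMod d) :
    star (Apoint d u k j) = Apoint d u j k := by
  rw [Apoint_apply d hodd, Apoint_apply d hodd]
  by_cases h : j + k = 2 * u.2
  · rw [if_pos h, if_pos (by linear_combination h), chi_star]
    congr 1
    ring
  · rw [if_neg h, if_neg (fun hh => h (by linear_combination hh)), star_zero]

lemma Apoint_complete (j k p q : ZMod d) :
    ∑ u : ZMod d × ZMod d, Apoint d u j k * Apoint d u p q
      = if j = q ∧ k = p then (d : ℂ) else 0 := by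
  have h2 : (2 : ZMod d)⁻¹ * 2 = 1 := inv_two_mul_two d hodd
  rw [Fintype.sum_prod_type_right]
  have hterm : ∀ (u1 u2 : ZMod d),
      Apoint d (u1, u2) j k * Apoint d (u1, u2) p q
      = if (j + k = 2 * u2 ∧ p + q = 2 * u2) then chi d (((j - k) + (p - q)) * u1) else 0 := by
    intro u1 u2
    rw [Apoint_apply d hodd, Apoint_apply d hodd]
    by_cases h1 : j + k = 2 * u2 <;> by_cases h3 : p + q = 2 * u2
    · rw [if_pos h1, if_pos h3, if_pos ⟨h1, h3⟩, ← chi_add]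
      congr 1
      ring
    · simp [h1, h3]
    · simp [h1, h3]
    · simp [h1, h3]
  simp only [hterm]
  have hinner : ∀ u2 : ZMod d,
      (∑ u1 : ZMod d, if (j + k = 2 * u2 ∧ p + q = 2 * u2)
        then chi d (((j - k) + (p - q)) * u1) else 0)
      = if (j + k = 2 * u2 ∧ p + q = 2 * u2) then
          (if (j - k) + (p - q) = 0 then (d : ℂ) else 0) else 0 := by
    intro u2
    by_cases h : (j + k = 2 * u2 ∧ p + q = 2 * u2)
    · simp only [if_pos h]
      exact chi_sum d _
    · simp only [if_neg h, Finset.sum_const_zero]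
  simp only [hinner]
  have hcond : ∀ u2 : ZMod d, (j + k = 2 * u2 ∧ p + q = 2 * u2)
      = (u2 = (2 : ZMod d)⁻¹ * (j + k) ∧ p + q = j + k) := by
    intro u2
    simp only [eq_iff_iff]
    constructor
    · rintro ⟨ha, hb⟩
      constructor
      · rw [ha, ← mul_assoc, h2, one_mul]
      · rw [ha, hb]
    · rintro ⟨ha, hb⟩
      have : 2 * u2 = j + k := by
        rw [ha, ← mul_assoc, mul_comm (2 : ZMod d) _, h2, one_mul]
      exact ⟨this.symm, hb.trans this.symm⟩
  simp only [hcond]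
  have hsplit : ∀ u2 : ZMod d,
      (if (u2 = (2 : ZMod d)⁻¹ * (j + k) ∧ p + q = j + k)
        then (if (j - k) + (p - q) = 0 then (d : ℂ) else 0) else 0)
      = if u2 = (2 : ZMod d)⁻¹ * (j + k) then
          (if p + q = j + k then (if (j - k) + (p - q) = 0 then (d : ℂ) else 0) else 0) else 0 := by
    intro u2
    split_ifs <;> tauto
  simp only [hsplit]
  rw [Finset.sum_ite_eq' Finset.univ ((2 : ZMod d)⁻¹ * (j + k))]
  simp only [Finset.mem_univ, if_true]
  by_cases hA : p + q = j + k <;> by_cases hB : (j - k) + (p - q) = 0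
  · rw [if_pos hA, if_pos hB, if_pos]
    constructor
    · exact two_cancel d hodd (by linear_combination hB - hA)
    · exact two_cancel d hodd (by linear_combination -hA - hB)
  · rw [if_pos hA, if_neg hB, if_neg]
    rintro ⟨rfl, rfl⟩
    exact hB (by ring)
  · rw [if_neg hA, if_neg]
    rintro ⟨rfl, rfl⟩
    exact hA (by ring)
  · rw [if_neg hA, if_neg]
    rintro ⟨rfl, rfl⟩
    exact hA (by ring)

end complete

section bcomp
variable (d : ℕ) [NeZero d] (hodd : Odd d) (m : ℕ)
include hodd

lemma Bcomp_complete (x y p q : Fin m → ZMod d) :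
    ∑ v : Fin m → ZMod d × ZMod d, Bcomp d m v x y * Bcomp d m v p q
      = if x = q ∧ y = p then (d : ℂ) ^ m else 0 := by
  have h1 : ∀ v : Fin m → ZMod d × ZMod d,
      Bcomp d m v x y * Bcomp d m v p q
      = ∏ i : Fin m, (Apoint d (v i) (x i) (y i) * Apoint d (v i) (p i) (q i)) := by
    intro v
    simp only [Bcomp, Matrix.of_apply, Finset.prod_mul_distrib]
  simp only [h1]
  rw [show (Finset.univ : Finset (Fin m → ZMod d × ZMod d))
      = Fintype.piFinset (fun _ => Finset.univ) from (Fintype.piFinset_univ).symm]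
  rw [← Finset.prod_univ_sum (fun _ : Fin m => (Finset.univ : Finset (ZMod d × ZMod d)))
      (fun i u => Apoint d u (x i) (y i) * Apoint d u (p i) (q i))]
  have h2 : ∀ i : Fin m, (∑ u : ZMod d × ZMod d, Apoint d u (x i) (y i) * Apoint d u (p i) (q i))
      = if x i = q i ∧ y i = p i then (d : ℂ) else 0 := fun i => Apoint_complete d hodd _ _ _ _
  simp only [h2]
  by_cases h : x = q ∧ y = p
  · rw [if_pos h]
    rw [Finset.prod_congr rfl (fun i _ => if_pos ⟨congrFun h.1 i, congrFun h.2 i⟩)]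
    simp
  · rw [if_neg h]
    have : ∃ i : Fin m, ¬(x i = q i ∧ y i = p i) := by
      by_contra hc
      push_neg at hc
      exact h ⟨funext fun i => (hc i).1, funext fun i => (hc i).2⟩
    obtain ⟨i, hi⟩ := this
    exact Finset.prod_eq_zero (Finset.mem_univ i) (if_neg hi)

lemma Bcomp_star (v : Fin m → ZMod d × ZMod d) (x y : Fin m → ZMod d) :
    star (Bcomp d m v y x) = Bcomp d m v x y := by
  simp only [Bcomp, Matrix.of_apply]
  rw [star_prod]
  exact Finset.prod_congr rfl fun i _ => Apoint_star d hodd _ _ _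

lemma trace_BP_real (P : Matrix (Fin m → ZMod d) (Fin m → ZMod d) ℂ) (hPH : Pᴴ = P)
    (v : Fin m → ZMod d × ZMod d) :
    star ((Bcomp d m v * P).trace) = (Bcomp d m v * P).trace := by
  have hP : ∀ a b, star (P a b) = P b a := by
    intro a b
    have := congrFun (congrFun hPH b) a
    rw [Matrix.conjTranspose_apply] at this
    exact this
  rw [Matrix.trace]
  simp only [Matrix.diag, Matrix.mul_apply]
  rw [star_sum]
  simp only [star_sum, star_mul']
  have : ∀ a b, star (Bcomp d m v a b) * star (P b a) = Bcomp d m v b a * P a b := by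
    intro a b
    rw [hP, Bcomp_star d hodd]
  simp only [this]
  rw [Finset.sum_comm]

lemma Bcomp_decomp (P : Matrix (Fin m → ZMod d) (Fin m → ZMod d) ℂ) (x y : Fin m → ZMod d) :
    ∑ v : Fin m → ZMod d × ZMod d, (Bcomp d m v * P).trace * Bcomp d m v x y
      = (d : ℂ) ^ m * P x y := by
  have htr : ∀ v : Fin m → ZMod d × ZMod d,
      (Bcomp d m v * P).trace = ∑ a : Fin m → ZMod d, ∑ b : Fin m → ZMod d,
        Bcomp d m v a b * P b a := by
    intro v
    rw [Matrix.trace]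
    simp only [Matrix.diag, Matrix.mul_apply]
  calc ∑ v : Fin m → ZMod d × ZMod d, (Bcomp d m v * P).trace * Bcomp d m v x y
      = ∑ v : Fin m → ZMod d × ZMod d, ∑ a : Fin m → ZMod d, ∑ b : Fin m → ZMod d,
          P b a * (Bcomp d m v a b * Bcomp d m v x y) := by
        refine Finset.sum_congr rfl fun v _ => ?_
        rw [htr, Finset.sum_mul]
        refine Finset.sum_congr rfl fun a _ => ?_
        rw [Finset.sum_mul]
        refine Finset.sum_congr rfl fun b _ => ?_
        ring
    _ = ∑ a : Fin m → ZMod d, ∑ b : Fin m → ZMod d,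
          P b a * ∑ v : Fin m → ZMod d × ZMod d, (Bcomp d m v a b * Bcomp d m v x y) := by
        rw [Finset.sum_comm]
        refine Finset.sum_congr rfl fun a _ => ?_
        rw [Finset.sum_comm]
        refine Finset.sum_congr rfl fun b _ => ?_
        rw [Finset.mul_sum]
    _ = (d : ℂ) ^ m * P x y := by
        simp only [Bcomp_complete d hodd m]
        rw [Finset.sum_eq_single y]
        · rw [Finset.sum_eq_single x]
          · rw [if_pos ⟨rfl, rfl⟩]; ring
          · intro b _ hb
            rw [if_neg (fun h => hb h.2), mul_zero]
          · intro h; exact absurd (Finset.mem_univ x) h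
        · intro a _ ha
          rw [Finset.sum_eq_zero]
          intro b _
          rw [if_neg (fun h => ha h.1), mul_zero]
        · intro h; exact absurd (Finset.mem_univ y) h

end bcomp

/-- Positively represented measurements preserve positivity of the Wigner representation. -/
theorem positive_measurement_preserves_positivity (d : ℕ) [NeZero d]
    (hodd : Odd d) (hd : 1 < d) (m : ℕ) (hm : 1 ≤ m)
    (σ : Matrix (ZMod d × (Fin m → ZMod d)) (ZMod d × (Fin m → ZMod d)) ℂ)
    (hσH : σᴴ = σ)
    (hσpos : ∀ (u : ZMod d × ZMod d) (v : Fin m → ZMod d × ZMod d),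
        0 ≤ (((Apoint d u ⊗ₖ Bcomp d m v) * σ).trace).re)
    (P : Matrix (Fin m → ZMod d) (Fin m → ZMod d) ℂ) (hPH : Pᴴ = P)
    (hPpos : ∀ v : Fin m → ZMod d × ZMod d, 0 ≤ ((Bcomp d m v * P).trace).re)
    (u : ZMod d × ZMod d) :
    0 ≤ (((Apoint d u ⊗ₖ P) * σ).trace).re := by
  classical
  have htr : ∀ (Q : Matrix (Fin m → ZMod d) (Fin m → ZMod d) ℂ),
      ((Apoint d u ⊗ₖ Q) * σ).trace
      = ∑ r : ZMod d × (Fin m → ZMod d), ∑ s : ZMod d × (Fin m → ZMod d),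
          Apoint d u r.1 s.1 * Q r.2 s.2 * σ s r := by
    intro Q
    rw [Matrix.trace]
    simp only [Matrix.diag, Matrix.mul_apply, Matrix.kroneckerMap_apply]
  have key : ∑ v : Fin m → ZMod d × ZMod d,
        (Bcomp d m v * P).trace * ((Apoint d u ⊗ₖ Bcomp d m v) * σ).trace
      = (d : ℂ) ^ m * ((Apoint d u ⊗ₖ P) * σ).trace := by
    calc ∑ v : Fin m → ZMod d × ZMod d,
          (Bcomp d m v * P).trace * ((Apoint d u ⊗ₖ Bcomp d m v) * σ).trace
        = ∑ v : Fin m → ZMod d × ZMod d, ∑ r : ZMod d × (Fin m → ZMod d),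
            ∑ s : ZMod d × (Fin m → ZMod d),
            (Apoint d u r.1 s.1 * σ s r) * ((Bcomp d m v * P).trace * Bcomp d m v r.2 s.2) := by
          refine Finset.sum_congr rfl fun v _ => ?_
          rw [htr, Finset.mul_sum]
          refine Finset.sum_congr rfl fun r _ => ?_
          rw [Finset.mul_sum]
          refine Finset.sum_congr rfl fun s _ => ?_
          ring
      _ = ∑ r : ZMod d × (Fin m → ZMod d), ∑ s : ZMod d × (Fin m → ZMod d),
            (Apoint d u r.1 s.1 * σ s r) * ∑ v : Fin m → ZMod d × ZMod d,
            ((Bcomp d m v * P).trace * Bcomp d m v r.2 s.2) := by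
          rw [Finset.sum_comm]
          refine Finset.sum_congr rfl fun r _ => ?_
          rw [Finset.sum_comm]
          refine Finset.sum_congr rfl fun s _ => ?_
          rw [Finset.mul_sum]
      _ = ∑ r : ZMod d × (Fin m → ZMod d), ∑ s : ZMod d × (Fin m → ZMod d),
            (Apoint d u r.1 s.1 * σ s r) * ((d : ℂ) ^ m * P r.2 s.2) := by
          refine Finset.sum_congr rfl fun r _ => ?_
          refine Finset.sum_congr rfl fun s _ => ?_
          rw [Bcomp_decomp d hodd m P]
      _ = (d : ℂ) ^ m * ((Apoint d u ⊗ₖ P) * σ).trace := by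
          rw [htr, Finset.mul_sum]
          refine Finset.sum_congr rfl fun r _ => ?_
          rw [Finset.mul_sum]
          refine Finset.sum_congr rfl fun s _ => ?_
          ring
  have him : ∀ v : Fin m → ZMod d × ZMod d, ((Bcomp d m v * P).trace).im = 0 := by
    intro v
    have := trace_BP_real d hodd m P hPH v
    rw [Complex.star_def, Complex.conj_eq_iff_im] at this
    exact this
  have hre : 0 ≤ ((d : ℂ) ^ m * ((Apoint d u ⊗ₖ P) * σ).trace).re := by
    rw [← key, Complex.re_sum]
    refine Finset.sum_nonneg fun v _ => ?_
    rw [Complex.mul_re, him, zero_mul, sub_zero]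
    exact mul_nonneg (hPpos v) (hσpos u v)
  have hcast : ((d : ℂ)) ^ m = (((d : ℝ) ^ m : ℝ) : ℂ) := by push_cast; ring
  rw [hcast, Complex.re_ofReal_mul] at hre
  have hpos : (0 : ℝ) < (d : ℝ) ^ m :=
    pow_pos (by exact_mod_cast Nat.lt_of_lt_of_le Nat.zero_lt_one hd.le) m
  exact nonneg_of_mul_nonneg_right hre hpos
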